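/- Let 0 < L < U, θ = U/L > 1, and α > 1 with (α - 1)e^α = θ - 1. Define φ(w) = L + (αL - L)e^{αw} for w ∈ [0,1]. Then for all w ∈ [0,1], φ(w) = α(∫₀^w φ(u) du + (1 - w)L), and φ(0) = αL, φ(1) = U. -/

import Mathlib

open intervalIntegral in

theorem stmt_5 (L U θ α : ℝ) (hL : 0 < L) (hLU : L < U) (hθ : θ = U / L)
    (hα : 1 < α) (hαθ : (α - 1) * Real.exp α = θ - 1)
    (φ : ℝ → ℝ) (hφ : ∀ w, φ w = L + (α * L - L) * Real.exp (α * w)) :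
    (∀ w ∈ Set.Icc (0:ℝ) 1,
      φ w = α * ((∫ u in (0:ℝ)..w, φ u) + (1 - w) * L)) ∧
    φ 0 = α * L ∧ φ 1 = U := by
  have hα0 : α ≠ 0 := by linarith
  refine ⟨fun w _ => ?_, ?_, ?_⟩
  · have hint : (∫ u in (0:ℝ)..w, φ u)
        = L * w + (α * L - L) * ((Real.exp (α * w) - 1) / α) := by
      have h1 : (∫ u in (0:ℝ)..w, φ u)
          = ∫ u in (0:ℝ)..w, (L + (α * L - L) * Real.exp (α * u)) := by
        apply intervalIntegral.integral_congr; intro u _; exact hφ u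
      rw [h1]
      have h2 : ∫ u in (0:ℝ)..w, Real.exp (α * u)
          = (Real.exp (α * w) - 1) / α := by
        have := intervalIntegral.integral_comp_mul_left (fun x => Real.exp x)
          (a := 0) (b := w) hα0
        simp only [integral_exp, mul_zero, Real.exp_zero, smul_eq_mul] at this
        rw [this]; field_simp
      rw [intervalIntegral.integral_add (intervalIntegrable_const)
        (Continuous.intervalIntegrable (by continuity) 0 w),
        intervalIntegral.integral_const_mul, h2]
      simp [mul_comm]
    rw [hφ w, hint]; field_simp; ring
  · rw [hφ 0]; simp
  · have hLne : L ≠ 0 := ne_of_gt hL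
    rw [hφ 1]
    have : θ = U / L := hθ
    have hU : U = θ * L := by rw [hθ, div_mul_cancel₀ U hLne]
    rw [hU]
    have : (α - 1) * Real.exp α = θ - 1 := hαθ
    rw [mul_one]; nlinarith [this]
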